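/- Fix reals ω₀ > 0, γ > 0, θ > 0 and an integer ℓ. For each integer n ≥ 1 let G^n_{ω₀,θ,ℓ}(x, y) = Σ_{j=0}^n ψ_j(x) ψ_j(y)/(λ_j + ω₀² − (2πℓ/θ)² + i·4γπℓ/θ), where ψ_j(x) = ((2 − δ_{0,j})/(n+1))^{1/2} cos(π j (2x+1)/(2(n+1))) and λ_j = 4 sin²(π j/(2(n+1))). Then lim_{n→∞} Σ_{x=0}^n |G^n_{ω₀,θ,ℓ}(x, n)|² = 2 ∫₀¹ cos²(πz/2) · { [4 sin²(πz/2) + ω₀² − (2πℓ/θ)²]² + (4γπℓ/θ)² }^{−1} dz. -/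

import Mathlib

open Real Filter

noncomputable section

/-- The Neumann eigenvectors `ψ_j(x) = ((2 − δ_{0,j})/(n+1))^{1/2} cos(πj(2x+1)/(2(n+1)))`. -/
def psiN (n j x : ℕ) : ℝ :=
  Real.sqrt ((2 - if j = 0 then 1 else 0) / (n + 1)) *
    Real.cos (π * j * (2 * x + 1) / (2 * (n + 1)))

/-- The Green's function `G^n_{ω₀,θ,ℓ}(x,y)` of the complex operator
`[ω₀² − (2πℓ/θ)² + i·4γπℓ/θ] − Δ_N` on `{0,…,n}`, in its eigenfunction representation. -/
def greenNC (n : ℕ) (ω₀ γ θ : ℝ) (l : ℤ) (x y : ℕ) : ℂ :=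
  ∑ j ∈ Finset.range (n + 1),
    ((psiN n j x * psiN n j y : ℝ) : ℂ) /
      (((4 * Real.sin (π * j / (2 * (n + 1))) ^ 2 + ω₀ ^ 2 - (2 * π * l / θ) ^ 2 : ℝ) : ℂ)
        + Complex.I * ((4 * γ * π * l / θ : ℝ) : ℂ))

lemma sum_cos_odd (β : ℝ) (N : ℕ) :
    2 * Real.sin β * ∑ x ∈ Finset.range N, Real.cos ((2 * x + 1) * β)
      = Real.sin (2 * N * β) := by
  induction N with
  | zero => simp
  | succ n ih =>
    rw [Finset.sum_range_succ, mul_add, ih]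
    push_cast
    have e1 : 2 * ((n : ℝ) + 1) * β = ((2 * n + 1) * β) + β := by ring
    have e2 : 2 * (n : ℝ) * β = ((2 * n + 1) * β) - β := by ring
    rw [e1, e2, Real.sin_add, Real.sin_sub]
    ring

lemma S_eq_zero {β : ℝ} {N : ℕ} (h1 : Real.sin β ≠ 0) (h2 : Real.sin (2 * N * β) = 0) :
    ∑ x ∈ Finset.range N, Real.cos ((2 * x + 1) * β) = 0 := by
  have := sum_cos_odd β N
  rw [h2] at this
  rcases mul_eq_zero.1 this with h | h
  · rcases mul_eq_zero.1 h with h' | h'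
    · linarith
    · exact absurd h' h1
  · exact h

lemma sin_ne_zero_of (m : ℝ) (hm0 : m ≠ 0) (hm1 : |m| < 1) : Real.sin (m * π) ≠ 0 := by
  have h1 : -π < m * π := by nlinarith [abs_lt.1 hm1, Real.pi_pos]
  have h2 : m * π < π := by nlinarith [abs_lt.1 hm1, Real.pi_pos]
  rw [ne_eq, Real.sin_eq_zero_iff_of_lt_of_lt h1 h2]
  exact mul_ne_zero hm0 Real.pi_ne_zero

lemma sum_cos_mul_cos (n j k : ℕ) (hj : j ≤ n) (hk : k ≤ n) :
    ∑ x ∈ Finset.range (n + 1),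
      Real.cos (π * j * (2 * x + 1) / (2 * (n + 1))) *
        Real.cos (π * k * (2 * x + 1) / (2 * (n + 1)))
      = if j = k then (if j = 0 then ((n : ℝ) + 1) else ((n : ℝ) + 1) / 2) else 0 := by
  have hN : (0 : ℝ) < (n : ℝ) + 1 := by positivity
  have hNne : ((n : ℝ) + 1) ≠ 0 := ne_of_gt hN
  have hcj : (j : ℝ) ≤ n := Nat.cast_le.2 hj
  have hck : (k : ℝ) ≤ n := Nat.cast_le.2 hk
  have hj0' : (0:ℝ) ≤ j := Nat.cast_nonneg j
  have hk0' : (0:ℝ) ≤ k := Nat.cast_nonneg k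
  set βm : ℝ := ((j : ℝ) - k) / (2 * ((n : ℝ) + 1)) * π with hβm
  set βp : ℝ := ((j : ℝ) + k) / (2 * ((n : ℝ) + 1)) * π with hβp
  have key : ∀ x : ℕ,
      Real.cos (π * j * (2 * x + 1) / (2 * (n + 1))) *
        Real.cos (π * k * (2 * x + 1) / (2 * (n + 1)))
      = (Real.cos ((2 * x + 1) * βm) + Real.cos ((2 * x + 1) * βp)) / 2 := by
    intro x
    have cc : ∀ a b : ℝ, Real.cos a * Real.cos b = (Real.cos (a - b) + Real.cos (a + b)) / 2 := by
      intro a b; rw [Real.cos_sub, Real.cos_add]; ring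
    rw [cc]
    have e1 : π * j * (2 * x + 1) / (2 * (n + 1)) - π * k * (2 * x + 1) / (2 * (n + 1))
        = (2 * (x : ℝ) + 1) * βm := by rw [hβm]; field_simp
    have e2 : π * j * (2 * x + 1) / (2 * (n + 1)) + π * k * (2 * x + 1) / (2 * (n + 1))
        = (2 * (x : ℝ) + 1) * βp := by rw [hβp]; field_simp
    rw [e1, e2]
  rw [Finset.sum_congr rfl fun x _ => key x]
  have hsplit : ∑ x ∈ Finset.range (n + 1),
      (Real.cos ((2 * x + 1) * βm) + Real.cos ((2 * x + 1) * βp)) / 2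
      = ((∑ x ∈ Finset.range (n + 1), Real.cos ((2 * x + 1) * βm))
        + (∑ x ∈ Finset.range (n + 1), Real.cos ((2 * x + 1) * βp))) / 2 := by
    rw [← Finset.sum_add_distrib, Finset.sum_div]
  rw [hsplit]
  have hsinp : j + k ≠ 0 → Real.sin βp ≠ 0 := by
    intro hjk0
    have e : βp = (((j : ℝ) + k) / (2 * ((n : ℝ) + 1))) * π := by rw [hβp]
    rw [e]
    apply sin_ne_zero_of
    · have : (0:ℝ) < (j : ℝ) + k := by
        have : 0 < j + k := Nat.pos_of_ne_zero hjk0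
        exact_mod_cast this
      positivity
    · rw [abs_of_nonneg (by positivity), div_lt_one (by positivity)]
      linarith
  have hSp : j + k ≠ 0 → ∑ x ∈ Finset.range (n + 1), Real.cos ((2 * x + 1) * βp) = 0 := by
    intro hjk0
    apply S_eq_zero (hsinp hjk0)
    have e : 2 * ((n + 1 : ℕ) : ℝ) * βp = ((j + k : ℕ) : ℝ) * π := by
      rw [hβp]; push_cast; field_simp
    rw [e]; exact Real.sin_nat_mul_pi _
  by_cases hjk : j = k
  · subst hjk
    have hm0 : βm = 0 := by rw [hβm]; ring
    have s1 : ∑ x ∈ Finset.range (n + 1), Real.cos ((2 * x + 1) * βm) = (n : ℝ) + 1 := by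
      simp [hm0]
    by_cases hj0 : j = 0
    · subst hj0
      have hp0 : βp = 0 := by rw [hβp]; norm_num
      simp [hm0, hp0]
    · rw [s1, hSp (by omega), if_pos rfl, if_neg hj0]
      ring
  · have hSm : ∑ x ∈ Finset.range (n + 1), Real.cos ((2 * x + 1) * βm) = 0 := by
      apply S_eq_zero
      · have e : βm = (((j : ℝ) - k) / (2 * ((n : ℝ) + 1))) * π := by rw [hβm]
        rw [e]
        apply sin_ne_zero_of
        · apply div_ne_zero
          · exact sub_ne_zero.2 (fun h => hjk (Nat.cast_injective h))
          · positivity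
        · rw [abs_div, abs_of_pos (by positivity : (0:ℝ) < 2 * ((n : ℝ) + 1)),
            div_lt_one (by positivity)]
          rw [abs_lt]
          constructor <;> linarith
      · have e : 2 * ((n + 1 : ℕ) : ℝ) * βm = (((j : ℤ) - k : ℤ) : ℝ) * π := by
          rw [hβm]; push_cast; field_simp
        rw [e]; exact Real.sin_int_mul_pi _
    rw [hSm, hSp (by omega), if_neg hjk]
    ring

lemma l2_col (N : ℕ) (p : ℕ → ℕ → ℝ) (d : ℕ → ℂ)
    (horth : ∀ j ∈ Finset.range N, ∀ k ∈ Finset.range N,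
      ∑ x ∈ Finset.range N, p j x * p k x = if j = k then (1 : ℝ) else 0) (y : ℕ) :
    ∑ x ∈ Finset.range N,
        ‖∑ j ∈ Finset.range N, ((p j x * p j y : ℝ) : ℂ) / d j‖ ^ 2
      = ∑ j ∈ Finset.range N, (p j y) ^ 2 / Complex.normSq (d j) := by
  have step1 : ∀ x : ℕ,
      ‖∑ j ∈ Finset.range N, ((p j x * p j y : ℝ) : ℂ) / d j‖ ^ 2
      = ((∑ j ∈ Finset.range N, ((p j x * p j y : ℝ) : ℂ) / d j) *
          (starRingEnd ℂ) (∑ j ∈ Finset.range N, ((p j x * p j y : ℝ) : ℂ) / d j)).re := by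
    intro x
    rw [Complex.mul_conj, Complex.ofReal_re, Complex.sq_norm]
  rw [Finset.sum_congr rfl fun x _ => step1 x, ← Complex.re_sum]
  have step2 : ∑ x ∈ Finset.range N,
      (∑ j ∈ Finset.range N, ((p j x * p j y : ℝ) : ℂ) / d j) *
        (starRingEnd ℂ) (∑ j ∈ Finset.range N, ((p j x * p j y : ℝ) : ℂ) / d j)
      = ∑ j ∈ Finset.range N, ((((p j y) ^ 2 : ℝ)) : ℂ) / (d j * (starRingEnd ℂ) (d j)) := by
    have expand : ∀ x : ℕ,
        (∑ j ∈ Finset.range N, ((p j x * p j y : ℝ) : ℂ) / d j) *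
          (starRingEnd ℂ) (∑ j ∈ Finset.range N, ((p j x * p j y : ℝ) : ℂ) / d j)
        = ∑ j ∈ Finset.range N, ∑ k ∈ Finset.range N,
            (((p j x * p k x : ℝ)) : ℂ) *
              ((((p j y * p k y : ℝ)) : ℂ) / (d j * (starRingEnd ℂ) (d k))) := by
      intro x
      rw [map_sum, Finset.sum_mul_sum]
      refine Finset.sum_congr rfl fun j _ => Finset.sum_congr rfl fun k _ => ?_
      rw [map_div₀, Complex.conj_ofReal]
      push_cast
      ring
    rw [Finset.sum_congr rfl fun x _ => expand x, Finset.sum_comm]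
    refine Finset.sum_congr rfl fun j hj => ?_
    rw [Finset.sum_comm]
    have inner : ∀ k ∈ Finset.range N,
        ∑ x ∈ Finset.range N,
          (((p j x * p k x : ℝ)) : ℂ) *
            ((((p j y * p k y : ℝ)) : ℂ) / (d j * (starRingEnd ℂ) (d k)))
        = (if j = k then ((((p j y * p k y : ℝ)) : ℂ) / (d j * (starRingEnd ℂ) (d k))) else 0) := by
      intro k hk
      rw [← Finset.sum_mul, ← Complex.ofReal_sum, horth j hj k hk]
      split <;> simp
    rw [Finset.sum_congr rfl inner, Finset.sum_ite_eq (Finset.range N) j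
      (fun k => (((p j y * p k y : ℝ)) : ℂ) / (d j * (starRingEnd ℂ) (d k))), if_pos hj]
    push_cast
    ring
  rw [step2]
  rw [Complex.re_sum]
  refine Finset.sum_congr rfl fun j _ => ?_
  rw [Complex.mul_conj, ← Complex.ofReal_div, Complex.ofReal_re]

lemma coef_nonneg (n j : ℕ) : (0:ℝ) ≤ (2 - if j = 0 then 1 else 0) / ((n:ℝ) + 1) := by
  have : (0:ℝ) ≤ 2 - if j = 0 then 1 else 0 := by split <;> norm_num
  positivity

lemma psiN_orthonormal (n j k : ℕ) (hj : j ≤ n) (hk : k ≤ n) :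
    ∑ x ∈ Finset.range (n + 1), psiN n j x * psiN n k x = if j = k then (1:ℝ) else 0 := by
  have hN : (0:ℝ) < (n:ℝ) + 1 := by positivity
  have e : ∀ x ∈ Finset.range (n + 1), psiN n j x * psiN n k x
      = (Real.sqrt ((2 - if j = 0 then 1 else 0) / ((n:ℝ) + 1)) *
          Real.sqrt ((2 - if k = 0 then 1 else 0) / ((n:ℝ) + 1)))
        * (Real.cos (π * j * (2 * x + 1) / (2 * (n + 1))) *
            Real.cos (π * k * (2 * x + 1) / (2 * (n + 1)))) := by
    intro x _; unfold psiN; push_cast; ring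
  rw [Finset.sum_congr rfl e, ← Finset.mul_sum, sum_cos_mul_cos n j k hj hk]
  by_cases hjk : j = k
  · subst hjk
    rw [if_pos rfl, if_pos rfl, Real.mul_self_sqrt (coef_nonneg n j)]
    by_cases hj0 : j = 0
    · rw [if_pos hj0, if_pos hj0]
      field_simp
      norm_num
    · rw [if_neg hj0, if_neg hj0]
      field_simp
      norm_num
  · rw [if_neg hjk, if_neg hjk, mul_zero]

lemma psiN_sq_boundary (n j : ℕ) :
    (psiN n j n) ^ 2 = ((2 - if j = 0 then 1 else 0) / ((n:ℝ) + 1)) *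
      Real.cos (π * j / (2 * ((n:ℝ) + 1))) ^ 2 := by
  unfold psiN
  rw [mul_pow, Real.sq_sqrt (coef_nonneg n j)]
  congr 1
  have hN : ((n:ℝ) + 1) ≠ 0 := by positivity
  have e : π * (j:ℝ) * (2 * n + 1) / (2 * ((n:ℝ) + 1))
      = (j:ℝ) * π - π * j / (2 * ((n:ℝ) + 1)) := by field_simp; ring
  rw [e, Real.cos_sub, Real.sin_nat_mul_pi, zero_mul, add_zero, mul_pow]
  have h1 : Real.cos ((j:ℝ) * π) ^ 2 = 1 := by
    have h2 := Real.sin_sq_add_cos_sq ((j:ℝ) * π)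
    rw [Real.sin_nat_mul_pi] at h2
    nlinarith
  rw [h1, one_mul]

lemma riemann_sum_tendsto (f : ℝ → ℝ) (hf : Continuous f) :
    Tendsto (fun n : ℕ => ∑ j ∈ Finset.range (n + 1), f (j / (n + 1)) / (n + 1)) atTop
      (nhds (∫ z in (0:ℝ)..1, f z)) := by
  rw [Metric.tendsto_atTop]
  intro ε hε
  have huc : UniformContinuousOn f (Set.Icc 0 1) :=
    isCompact_Icc.uniformContinuousOn_of_continuous hf.continuousOn
  rw [Metric.uniformContinuousOn_iff] at huc
  obtain ⟨δ, hδ, H⟩ := huc (ε / 2) (by linarith)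
  obtain ⟨M, hM⟩ := exists_nat_gt (1 / δ)
  refine ⟨M, fun n hn => ?_⟩
  have hNpos : (0:ℝ) < (n:ℝ) + 1 := by positivity
  have hstep : (1:ℝ) / ((n:ℝ) + 1) < δ := by
    rw [div_lt_iff₀ hNpos]
    have h1 : 1 / δ < (n:ℝ) + 1 := by
      have : (M:ℝ) ≤ n := Nat.cast_le.2 hn
      linarith
    calc (1:ℝ) = δ * (1 / δ) := by field_simp
    _ < δ * ((n:ℝ) + 1) := mul_lt_mul_of_pos_left h1 hδ
  set a : ℕ → ℝ := fun j => (j:ℝ) / ((n:ℝ) + 1) with ha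
  have hdiff : ∀ j : ℕ, a (j + 1) - a j = 1 / ((n:ℝ) + 1) := by
    intro j; simp only [ha]; push_cast; field_simp; ring
  have hmono : ∀ j : ℕ, a j ≤ a (j + 1) := by
    intro j
    have := hdiff j
    have h2 : (0:ℝ) < 1 / ((n:ℝ) + 1) := by positivity
    linarith
  have hmem : ∀ j ≤ n, a j ∈ Set.Icc (0:ℝ) 1 ∧ a (j + 1) ∈ Set.Icc (0:ℝ) 1 := by
    intro j hjn
    have h0 : (0:ℝ) ≤ a j := by positivity
    have h1 : a (j + 1) ≤ 1 := by
      simp only [ha]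
      rw [div_le_one hNpos]
      push_cast
      have : (j:ℝ) ≤ n := Nat.cast_le.2 hjn
      linarith
    exact ⟨⟨h0, le_trans (hmono j) h1⟩, ⟨le_trans h0 (hmono j), h1⟩⟩
  have hint : ∫ z in (0:ℝ)..1, f z
      = ∑ j ∈ Finset.range (n + 1), ∫ z in a j..a (j + 1), f z := by
    rw [intervalIntegral.sum_integral_adjacent_intervals
      (fun k _ => hf.intervalIntegrable _ _)]
    have e0 : a 0 = 0 := by simp [ha]
    have e1 : a (n + 1) = 1 := by
      simp only [ha]; push_cast; field_simp
    rw [e0, e1]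
  have hterm : ∀ j ∈ Finset.range (n + 1),
      |f (a j) / ((n:ℝ) + 1) - ∫ z in a j..a (j + 1), f z| ≤ ε / 2 / ((n:ℝ) + 1) := by
    intro j hjr
    have hjn : j ≤ n := Nat.lt_succ_iff.1 (Finset.mem_range.1 hjr)
    have hconst : f (a j) / ((n:ℝ) + 1) = ∫ _ in a j..a (j + 1), f (a j) := by
      rw [intervalIntegral.integral_const, hdiff j, smul_eq_mul]
      ring
    rw [hconst, ← intervalIntegral.integral_sub (intervalIntegrable_const)
      (hf.intervalIntegrable _ _)]
    have hb : ∀ z ∈ Set.uIoc (a j) (a (j + 1)), ‖f (a j) - f z‖ ≤ ε / 2 := by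
      intro z hz
      rw [Set.uIoc_of_le (hmono j)] at hz
      obtain ⟨⟨hj0, hj1⟩, ⟨hj0', hj1'⟩⟩ := hmem j hjn
      have hz1 : z ∈ Set.Icc (0:ℝ) 1 := ⟨le_trans hj0 (le_of_lt hz.1), le_trans hz.2 hj1'⟩
      have hdist : dist (a j) z < δ := by
        rw [Real.dist_eq, abs_of_nonpos (by linarith [hz.1] : a j - z ≤ 0)]
        have := hdiff j
        have := hz.2
        have := hz.1
        linarith [hstep]
      have := H (a j) ⟨hj0, hj1⟩ z hz1 hdist
      rw [Real.dist_eq] at this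
      rw [Real.norm_eq_abs]
      linarith
    have := intervalIntegral.norm_integral_le_of_norm_le_const hb
    rw [Real.norm_eq_abs] at this
    calc |∫ z in a j..a (j + 1), (f (a j) - f z)| ≤ ε / 2 * |a (j + 1) - a j| := this
    _ = ε / 2 / ((n:ℝ) + 1) := by
        rw [hdiff j, abs_of_pos (by positivity : (0:ℝ) < 1 / ((n:ℝ) + 1))]
        ring
  rw [Real.dist_eq, hint, ← Finset.sum_sub_distrib]
  calc |∑ j ∈ Finset.range (n + 1),
      (f (a j) / ((n:ℝ) + 1) - ∫ z in a j..a (j + 1), f z)|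
      ≤ ∑ j ∈ Finset.range (n + 1),
        |f (a j) / ((n:ℝ) + 1) - ∫ z in a j..a (j + 1), f z| := Finset.abs_sum_le_sum_abs _ _
    _ ≤ ∑ _j ∈ Finset.range (n + 1), ε / 2 / ((n:ℝ) + 1) := Finset.sum_le_sum hterm
    _ = ε / 2 := by
        rw [Finset.sum_const, Finset.card_range, nsmul_eq_mul]
        push_cast
        field_simp
    _ < ε := by linarith
lemma normSq_aux (r s : ℝ) :
    Complex.normSq ((r : ℂ) + Complex.I * (s : ℂ)) = r ^ 2 + s ^ 2 := by
  simp [Complex.normSq_apply]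
  ring

/-- The squared `ℓ²`-norm of the boundary column of `G^n_{ω₀,θ,ℓ}` converges:
`lim_{n→∞} Σ_{x=0}^n |G^n_{ω₀,θ,ℓ}(x,n)|²
  = 2 ∫₀¹ cos²(πz/2) ([4 sin²(πz/2) + ω₀² − (2πℓ/θ)²]² + (4γπℓ/θ)²)⁻¹ dz`. -/
theorem greenNC_column_l2_limit (ω₀ γ θ : ℝ) (hω : 0 < ω₀) (hγ : 0 < γ) (hθ : 0 < θ)
    (l : ℤ) :
    Tendsto (fun n : ℕ =>
        ∑ x ∈ Finset.range (n + 1), ‖greenNC n ω₀ γ θ l x n‖ ^ 2)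
      atTop
      (nhds (2 * ∫ z in (0:ℝ)..1, Real.cos (π * z / 2) ^ 2 /
        ((4 * Real.sin (π * z / 2) ^ 2 + ω₀ ^ 2 - (2 * π * l / θ) ^ 2) ^ 2
          + (4 * γ * π * l / θ) ^ 2))) := by
  have hD : ∀ u : ℝ, 0 ≤ u →
      0 < (u + ω₀ ^ 2 - (2 * π * l / θ) ^ 2) ^ 2 + (4 * γ * π * l / θ) ^ 2 := by
    intro u hu
    rcases eq_or_ne l 0 with hl | hl
    · subst hl
      have h3 : 0 < u + ω₀ ^ 2 := by nlinarith [pow_pos hω 2]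
      push_cast
      norm_num
      nlinarith [pow_pos h3 2]
    · have hb : (4 * γ * π * (l:ℝ) / θ) ≠ 0 := by
        apply div_ne_zero _ (ne_of_gt hθ)
        have : ((l:ℝ)) ≠ 0 := Int.cast_ne_zero.2 hl
        positivity
      have : 0 < (4 * γ * π * (l:ℝ) / θ) ^ 2 :=
        lt_of_le_of_ne (sq_nonneg _) (Ne.symm (pow_ne_zero 2 hb))
      nlinarith [sq_nonneg (u + ω₀ ^ 2 - (2 * π * l / θ) ^ 2)]
  set g : ℝ → ℝ := fun z => Real.cos (π * z / 2) ^ 2 /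
      ((4 * Real.sin (π * z / 2) ^ 2 + ω₀ ^ 2 - (2 * π * l / θ) ^ 2) ^ 2
        + (4 * γ * π * l / θ) ^ 2) with hg
  have hgcont : Continuous g := by
    apply Continuous.div
    · fun_prop
    · fun_prop
    · intro x
      exact ne_of_gt (hD _ (by positivity))
  have hform : ∀ n : ℕ,
      ∑ x ∈ Finset.range (n + 1), ‖greenNC n ω₀ γ θ l x n‖ ^ 2
      = 2 * (∑ j ∈ Finset.range (n + 1), g ((j:ℝ) / ((n:ℝ) + 1)) / ((n:ℝ) + 1))
        - g 0 / ((n:ℝ) + 1) := by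
    intro n
    have hNpos : (0:ℝ) < (n:ℝ) + 1 := by positivity
    set d : ℕ → ℂ := fun j =>
      (((4 * Real.sin (π * j / (2 * ((n:ℝ) + 1))) ^ 2 + ω₀ ^ 2 - (2 * π * l / θ) ^ 2 : ℝ)) : ℂ)
        + Complex.I * ((4 * γ * π * l / θ : ℝ) : ℂ) with hd
    have horth : ∀ j ∈ Finset.range (n + 1), ∀ k ∈ Finset.range (n + 1),
        ∑ x ∈ Finset.range (n + 1), psiN n j x * psiN n k x = if j = k then (1:ℝ) else 0 :=
      fun j hj k hk => psiN_orthonormal n j k (Nat.lt_succ_iff.1 (Finset.mem_range.1 hj))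
        (Nat.lt_succ_iff.1 (Finset.mem_range.1 hk))
    have hid : ∑ x ∈ Finset.range (n + 1), ‖greenNC n ω₀ γ θ l x n‖ ^ 2
        = ∑ j ∈ Finset.range (n + 1), (psiN n j n) ^ 2 / Complex.normSq (d j) := by
      have h := l2_col (n + 1) (psiN n) d horth n
      convert h using 2 with x hx
      rfl
    rw [hid]
    have hns : ∀ j : ℕ, Complex.normSq (d j)
        = (4 * Real.sin (π * j / (2 * ((n:ℝ) + 1))) ^ 2 + ω₀ ^ 2 - (2 * π * l / θ) ^ 2) ^ 2
          + (4 * γ * π * l / θ) ^ 2 := by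
      intro j
      rw [hd]
      exact normSq_aux _ _
    have hterm : ∀ j ∈ Finset.range (n + 1),
        (psiN n j n) ^ 2 / Complex.normSq (d j)
        = 2 * (g ((j:ℝ) / ((n:ℝ) + 1)) / ((n:ℝ) + 1))
          - (if j = 0 then g ((j:ℝ) / ((n:ℝ) + 1)) / ((n:ℝ) + 1) else 0) := by
      intro j _
      rw [hns j, psiN_sq_boundary n j, hg]
      have harg : π * ((j:ℝ) / ((n:ℝ) + 1)) / 2 = π * j / (2 * ((n:ℝ) + 1)) := by
        rw [mul_div_assoc', div_div, mul_comm ((n:ℝ) + 1) 2]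
      simp only [harg]
      by_cases hj0 : j = 0
      · rw [if_pos hj0, if_pos hj0]
        ring
      · rw [if_neg hj0, if_neg hj0]
        ring
    rw [Finset.sum_congr rfl hterm, Finset.sum_sub_distrib, ← Finset.mul_sum]
    congr 1
    have : ∑ j ∈ Finset.range (n + 1),
        (if j = 0 then g ((j:ℝ) / ((n:ℝ) + 1)) / ((n:ℝ) + 1) else 0)
        = g ((0:ℝ) / ((n:ℝ) + 1)) / ((n:ℝ) + 1) := by
      rw [Finset.sum_ite_eq' (Finset.range (n + 1)) 0
        (fun j => g ((j:ℝ) / ((n:ℝ) + 1)) / ((n:ℝ) + 1))]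
      simp
    rw [this]
    norm_num
  rw [funext hform]
  have h1 : Tendsto (fun n : ℕ =>
      2 * (∑ j ∈ Finset.range (n + 1), g ((j:ℝ) / ((n:ℝ) + 1)) / ((n:ℝ) + 1))) atTop
      (nhds (2 * ∫ z in (0:ℝ)..1, g z)) :=
    (riemann_sum_tendsto g hgcont).const_mul 2
  have h0 : Tendsto (fun n : ℕ => g 0 / ((n:ℝ) + 1)) atTop (nhds 0) := by
    have h := (tendsto_const_div_atTop_nhds_zero_nat (g 0)).comp (tendsto_add_atTop_nat 1)
    exact h.congr fun n => by simp [Function.comp]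
  have := h1.sub h0
  rw [sub_zero] at this
  exact this

end
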